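/- Let G be a connected k-uniform hypergraph on {1,…,n} with at least one edge, and let x ∈ ℂ^n be a nonzero vector satisfying ((D+A) x^{k−1})_i = 0 for all i (i.e., x is an eigenvector of the signless Laplacian tensor associated with the eigenvalue zero). Then x_i ≠ 0 for every i ∈ {1,…,n}, and x_i^k = x_j^k for all i, j; consequently all components of x have the same modulus and every ratio x_i/x_j is a k-th root of unity. -/

import Mathlib

open Finset

/-- Degree of vertex `i` in the hypergraph with edge set `E`. -/
def hdeg {n : ℕ} (E : Finset (Finset (Fin n))) (i : Fin n) : ℕ :=
  (E.filter fun e => i ∈ e).card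

/-- Laplacian tensor action `((D - A) x^{k-1})_i` over ℂ. -/
noncomputable def lapC (k : ℕ) {n : ℕ} (E : Finset (Finset (Fin n)))
    (x : Fin n → ℂ) (i : Fin n) : ℂ :=
  (hdeg E i : ℂ) * x i ^ (k - 1) -
    ∑ e ∈ E.filter (fun e => i ∈ e), ∏ j ∈ e.erase i, x j

/-- Signless Laplacian tensor action `((D + A) x^{k-1})_i` over ℂ. -/
noncomputable def slapC (k : ℕ) {n : ℕ} (E : Finset (Finset (Fin n)))
    (x : Fin n → ℂ) (i : Fin n) : ℂ :=
  (hdeg E i : ℂ) * x i ^ (k - 1) +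
    ∑ e ∈ E.filter (fun e => i ∈ e), ∏ j ∈ e.erase i, x j

/-- Laplacian tensor action `((D - A) x^{k-1})_i` over ℝ. -/
noncomputable def lapR (k : ℕ) {n : ℕ} (E : Finset (Finset (Fin n)))
    (x : Fin n → ℝ) (i : Fin n) : ℝ :=
  (hdeg E i : ℝ) * x i ^ (k - 1) -
    ∑ e ∈ E.filter (fun e => i ∈ e), ∏ j ∈ e.erase i, x j

/-- Signless Laplacian tensor action `((D + A) x^{k-1})_i` over ℝ. -/
noncomputable def slapR (k : ℕ) {n : ℕ} (E : Finset (Finset (Fin n)))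
    (x : Fin n → ℝ) (i : Fin n) : ℝ :=
  (hdeg E i : ℝ) * x i ^ (k - 1) +
    ∑ e ∈ E.filter (fun e => i ∈ e), ∏ j ∈ e.erase i, x j

/-- The hypergraph with edge set `E` is connected: every pair of distinct vertices is
joined by a chain of edges with consecutive edges intersecting. -/
def HConnected {n : ℕ} (E : Finset (Finset (Fin n))) : Prop :=
  ∀ i j : Fin n, i ≠ j → ∃ m : ℕ, ∃ es : Fin (m + 1) → Finset (Fin n),
    (∀ r, es r ∈ E) ∧ i ∈ es 0 ∧ j ∈ es (Fin.last m) ∧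
    ∀ r : Fin m, (es r.castSucc ∩ es r.succ).Nonempty


lemma aux_sum_unit {α : Type*} {s : Finset α} {z : α → ℂ}
    (h1 : ∀ e ∈ s, ‖z e‖ ≤ 1)
    (hsum : ∑ e ∈ s, z e = (s.card : ℂ)) : ∀ e ∈ s, z e = 1 := by
  have hre : ∀ e ∈ s, (z e).re ≤ 1 := fun e he =>
    le_trans (Complex.re_le_norm _) (h1 e he)
  have hsre : ∑ e ∈ s, (z e).re = s.card := by
    rw [← Complex.re_sum, hsum, Complex.natCast_re]
  have hz : ∑ e ∈ s, (1 - (z e).re) = 0 := by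
    rw [Finset.sum_sub_distrib, hsre, Finset.sum_const, nsmul_eq_mul, mul_one, sub_self]
  have hzero : ∀ e ∈ s, 1 - (z e).re = 0 :=
    (Finset.sum_eq_zero_iff_of_nonneg (fun e he => by linarith [hre e he])).1 hz
  intro e he
  have hre1 : (z e).re = 1 := by have := hzero e he; linarith
  have habs : ‖z e‖ = 1 := le_antisymm (h1 e he)
    (by calc (1:ℝ) = (z e).re := hre1.symm
          _ ≤ ‖z e‖ := Complex.re_le_norm _)
  have him : (z e).im = 0 := by
    have h2 := Complex.sq_norm (z e)
    rw [habs, Complex.normSq_apply, ← hre1] at h2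
    nlinarith [sq_nonneg (z e).im]
  exact Complex.ext (by simp [hre1]) (by simp [him])

lemma aux_prod_max {α : Type*} [DecidableEq α] {s : Finset α} {f : α → ℝ} {M : ℝ} (hM : 0 < M)
    (h0 : ∀ j ∈ s, 0 ≤ f j) (h1 : ∀ j ∈ s, f j ≤ M)
    (hp : ∏ j ∈ s, f j = M ^ s.card) : ∀ j ∈ s, f j = M := by
  intro j0 hj0
  by_contra hne
  have hlt : f j0 < M := lt_of_le_of_ne (h1 j0 hj0) hne
  have he1 : ∏ j ∈ s.erase j0, f j ≤ M ^ (s.erase j0).card := by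
    calc ∏ j ∈ s.erase j0, f j ≤ ∏ _j ∈ s.erase j0, M :=
          Finset.prod_le_prod (fun j hj => h0 j (mem_of_mem_erase hj))
            (fun j hj => h1 j (mem_of_mem_erase hj))
      _ = M ^ (s.erase j0).card := by rw [Finset.prod_const]
  have hcard : (s.erase j0).card = s.card - 1 := Finset.card_erase_of_mem hj0
  have hspos : 1 ≤ s.card := Finset.card_pos.mpr ⟨j0, hj0⟩
  have hstrict : ∏ j ∈ s, f j < M ^ s.card := by
    rw [← Finset.mul_prod_erase s f hj0]
    calc f j0 * ∏ j ∈ s.erase j0, f j ≤ f j0 * M ^ (s.erase j0).card :=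
          mul_le_mul_of_nonneg_left he1 (h0 j0 hj0)
      _ < M * M ^ (s.erase j0).card :=
          mul_lt_mul_of_pos_right hlt (pow_pos hM _)
      _ = M ^ s.card := by
          rw [hcard, ← pow_succ']
          congr 1
          omega
  rw [hp] at hstrict
  exact lt_irrefl _ hstrict

lemma chain_all {n m : ℕ} (es : Fin (m+1) → Finset (Fin n)) (P : Fin n → Prop)
    (hstep : ∀ r, (∃ v ∈ es r, P v) → ∀ v ∈ es r, P v)
    (hint : ∀ r : Fin m, (es r.castSucc ∩ es r.succ).Nonempty)
    (h0 : ∃ v ∈ es 0, P v) :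
    ∀ r, ∀ v ∈ es r, P v := by
  intro r
  induction r using Fin.induction with
  | zero => exact hstep 0 h0
  | succ r ih =>
    obtain ⟨w, hw⟩ := hint r
    rw [Finset.mem_inter] at hw
    exact hstep r.succ ⟨w, hw.2, ih w hw.1⟩

lemma key_step {n k : ℕ} (hk : 3 ≤ k) {E : Finset (Finset (Fin n))}
    (hE : ∀ e ∈ E, e.card = k) {x : Fin n → ℂ}
    (heig : ∀ i, slapC k E x i = 0) {M : ℝ} (hMpos : 0 < M)
    (hmax : ∀ j, ‖x j‖ ≤ M) {i : Fin n}
    (hi : ‖x i‖ = M) :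
    ∀ e ∈ E, i ∈ e → (∀ j ∈ e, ‖x j‖ = M) ∧
      (∏ j ∈ e.erase i, x j) = - x i ^ (k-1) := by
  have hxi : x i ≠ 0 := by
    intro h
    rw [h, norm_zero] at hi
    exact absurd hi.symm (ne_of_gt hMpos)
  have hpw : x i ^ (k-1) ≠ 0 := pow_ne_zero _ hxi
  set F := E.filter (fun e => i ∈ e) with hF
  have heq : (F.card : ℂ) * x i ^ (k - 1) + ∑ e ∈ F, ∏ j ∈ e.erase i, x j = 0 := heig i
  set z : Finset (Fin n) → ℂ := fun e => -(∏ j ∈ e.erase i, x j) / x i ^ (k-1) with hz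
  have habsprod : ∀ e ∈ F, (∏ j ∈ e.erase i, ‖x j‖) ≤ M ^ (k-1) := by
    intro e he
    rw [Finset.mem_filter] at he
    have hcard : (e.erase i).card = k - 1 := by
      rw [Finset.card_erase_of_mem he.2, hE e he.1]
    calc ∏ j ∈ e.erase i, ‖x j‖ ≤ ∏ _j ∈ e.erase i, M :=
          Finset.prod_le_prod (fun j _ => norm_nonneg _) (fun j _ => hmax j)
      _ = M ^ (k-1) := by rw [Finset.prod_const, hcard]
  have habs1 : ∀ e ∈ F, ‖z e‖ ≤ 1 := by
    intro e he
    rw [hz]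
    simp only [norm_div, norm_neg, norm_pow, hi]
    rw [div_le_one (pow_pos hMpos _), norm_prod]
    exact habsprod e he
  have hsum : ∑ e ∈ F, z e = (F.card : ℂ) := by
    have h2 : ∑ e ∈ F, ∏ j ∈ e.erase i, x j = -((F.card : ℂ) * x i ^ (k-1)) := by
      linear_combination heq
    rw [hz]
    simp only []
    rw [← Finset.sum_div, Finset.sum_neg_distrib, h2, neg_neg, mul_div_assoc,
      div_self hpw, mul_one]
  have hone := aux_sum_unit habs1 hsum
  intro e heE hie
  have heF : e ∈ F := Finset.mem_filter.mpr ⟨heE, hie⟩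
  have hze := hone e heF
  rw [hz] at hze
  simp only [] at hze
  have hprod : (∏ j ∈ e.erase i, x j) = - x i ^ (k-1) := by
    field_simp at hze
    linear_combination -hze
  refine ⟨?_, hprod⟩
  have hcard : (e.erase i).card = k - 1 := by
    rw [Finset.card_erase_of_mem hie, hE e heE]
  have habseq : ∏ j ∈ e.erase i, ‖x j‖ = M ^ (e.erase i).card := by
    rw [← norm_prod, hprod, norm_neg, norm_pow, hi, hcard]
  have := aux_prod_max hMpos (fun j _ => norm_nonneg _)
    (fun j _ => hmax j) habseq
  intro j hj
  by_cases hji : j = i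
  · rw [hji]; exact hi
  · exact this j (Finset.mem_erase_of_ne_of_mem hji hj)

theorem stmt_3 {n k : ℕ} (hk : 3 ≤ k) (hn : k ≤ n)
    (E : Finset (Finset (Fin n))) (hE : ∀ e ∈ E, e.card = k)
    (hconn : HConnected E) (hne : E.Nonempty)
    (x : Fin n → ℂ) (hx : x ≠ 0)
    (heig : ∀ i, slapC k E x i = 0) :
    (∀ i, x i ≠ 0) ∧ (∀ i j, x i ^ k = x j ^ k) ∧
      (∀ i j, ‖x i‖ = ‖x j‖) ∧
      (∀ i j, (x i / x j) ^ k = 1) := by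
  haveI : Nontrivial (Fin n) := ⟨⟨⟨0, by omega⟩, ⟨1, by omega⟩, by simp [Fin.ext_iff]⟩⟩
  haveI : Nonempty (Fin n) := inferInstance
  -- maximum modulus
  obtain ⟨i0, -, hi0max⟩ := Finset.exists_max_image Finset.univ
    (fun j => ‖x j‖) Finset.univ_nonempty
  set M := ‖x i0‖ with hM
  have hmax : ∀ j, ‖x j‖ ≤ M := fun j => hi0max j (Finset.mem_univ j)
  have hMpos : 0 < M := by
    obtain ⟨j, hj⟩ := Function.ne_iff.mp hx
    have : 0 < ‖x j‖ := by simpa using hj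
    exact lt_of_lt_of_le this (hmax j)
  -- every modulus equals M
  have allM : ∀ i, ‖x i‖ = M := by
    intro i
    by_cases h : i = i0
    · rw [h]
    · obtain ⟨m, es, hesE, h0, hlast, hint⟩ := hconn i0 i (fun hh => h hh.symm)
      have := chain_all es (fun v => ‖x v‖ = M)
        (fun r ⟨v, hv, hPv⟩ w hw =>
          (key_step hk hE heig hMpos hmax hPv (es r) (hesE r) hv).1 w hw)
        hint ⟨i0, h0, rfl⟩
      exact this (Fin.last m) i hlast
  have hxne : ∀ i, x i ≠ 0 := by
    intro i h
    have := allM i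
    rw [h, norm_zero] at this
    exact absurd this.symm (ne_of_gt hMpos)
  -- within an edge all k-th powers agree
  have hedge : ∀ e ∈ E, ∀ i ∈ e, x i ^ k = - ∏ j ∈ e, x j := by
    intro e he i hi
    have hprod := (key_step hk hE heig hMpos hmax (allM i) e he hi).2
    have hm := Finset.mul_prod_erase e x hi
    rw [hprod] at hm
    have : x i * -x i ^ (k-1) = - x i ^ k := by
      rw [mul_neg, ← pow_succ']
      congr 2
      omega
    rw [this] at hm
    linear_combination -hm
  have hsame : ∀ e ∈ E, ∀ i ∈ e, ∀ j ∈ e, x i ^ k = x j ^ k := by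
    intro e he i hi j hj
    rw [hedge e he i hi, hedge e he j hj]
  -- global equality of k-th powers
  have hpowall : ∀ i j, x i ^ k = x j ^ k := by
    intro i j
    by_cases h : i = j
    · rw [h]
    · obtain ⟨m, es, hesE, h0, hlast, hint⟩ := hconn i j h
      have := chain_all es (fun v => x v ^ k = x i ^ k)
        (fun r ⟨v, hv, hPv⟩ w hw => by
          show x w ^ k = x i ^ k
          rw [hsame (es r) (hesE r) w hw v hv]; exact hPv)
        hint ⟨i, h0, rfl⟩
      exact (this (Fin.last m) j hlast).symm
  refine ⟨hxne, hpowall, fun i j => by rw [allM i, allM j], fun i j => ?_⟩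
  rw [div_pow, hpowall i j, div_self (pow_ne_zero _ (hxne j))]
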